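/- (Kurepa) If {X_s : s ∈ S} is a family of topological spaces and κ is an infinite cardinal with c(X_s) ≤ κ for each s ∈ S, then c(Π_{s∈S} X_s) ≤ 2^κ. -/

import Mathlib

open Cardinal Set Topology TopologicalSpace

universe u

/-- A strategy for Player I in the open-open game of length `κ` on `X`: to each
position `i < κ` and each partial play (a transfinite sequence of length `< κ`,
namely the sets chosen by Player II at earlier positions) it assigns a set. -/
def GameStrategy (X : Type u) (κ : Cardinal.{u}) : Type u :=
  (i : κ.ord.ToType) → ({j : κ.ord.ToType // j < i} → Set X) → Set X

/-- `s` is a winning strategy for Player I in the open-open game of length `κ` on `X`: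
it assigns to every transfinite sequence of length `< κ` of nonempty open subsets of `X`
a nonempty open subset of `X`, and for every transfinite sequence `(B_α)_{α<κ}` of
nonempty open sets with `B_α ⊆ s((B_γ)_{γ<α})` for all `α < κ`, the union
`⋃_{α<κ} B_α` is dense in `X`. -/
def IsWinningStrategy (X : Type u) [TopologicalSpace X] (κ : Cardinal.{u})
    (s : GameStrategy X κ) : Prop :=
  (∀ (i : κ.ord.ToType) (f : {j : κ.ord.ToType // j < i} → Set X),
      (∀ j, IsOpen (f j) ∧ (f j).Nonempty) → IsOpen (s i f) ∧ (s i f).Nonempty) ∧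
  (∀ B : κ.ord.ToType → Set X,
      (∀ i, (IsOpen (B i) ∧ (B i).Nonempty) ∧ B i ⊆ s i (fun j => B j.1)) →
      Dense (⋃ i, B i))

/-- `X` is `κ`-favorable: Player I has a winning strategy in the open-open game of
length `κ` on `X`. -/
def IsFavorable (X : Type u) [TopologicalSpace X] (κ : Cardinal.{u}) : Prop :=
  ∃ s : GameStrategy X κ, IsWinningStrategy X κ s

/-- `μ(X)`: the least infinite cardinal `κ` such that `X` is `κ`-favorable. -/
noncomputable def mu (X : Type u) [TopologicalSpace X] : Cardinal.{u} :=
  sInf {κ : Cardinal.{u} | ℵ₀ ≤ κ ∧ IsFavorable X κ}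

/-- The cellularity `c(X)`: the supremum of the cardinalities of families of pairwise
disjoint nonempty open subsets of `X`. -/
noncomputable def cellularity (X : Type u) [TopologicalSpace X] : Cardinal.{u} :=
  ⨆ U : {U : Set (Set X) // (∀ V ∈ U, IsOpen V ∧ V.Nonempty) ∧ U.PairwiseDisjoint id},
    #U.1

/-- A `π`-base for `X`: a family of nonempty open sets such that every nonempty open
set contains a member of the family. -/
def IsPiBase (X : Type u) [TopologicalSpace X] (B : Set (Set X)) : Prop :=
  (∀ V ∈ B, IsOpen V ∧ V.Nonempty) ∧
  (∀ U : Set X, IsOpen U → U.Nonempty → ∃ V ∈ B, V ⊆ U)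

/-- `π(X)`: the least cardinality of a `π`-base for `X`. -/
noncomputable def piWeight (X : Type u) [TopologicalSpace X] : Cardinal.{u} :=
  sInf {c : Cardinal.{u} | ∃ B : Set (Set X), IsPiBase X B ∧ #B = c}

/-- `Sat(X)`: the least cardinal `κ` such that every family of pairwise disjoint
nonempty open subsets of `X` has cardinality `< κ`. -/
noncomputable def satNumber (X : Type u) [TopologicalSpace X] : Cardinal.{u} :=
  sInf {κ : Cardinal.{u} | ∀ U : Set (Set X),
    (∀ V ∈ U, IsOpen V ∧ V.Nonempty) → U.PairwiseDisjoint id → #U < κ}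

/-- A skeletal map: a continuous surjection such that the closure of the image of every
nonempty open set has nonempty interior. -/
def Skeletal {X : Type u} {Y : Type u} [TopologicalSpace X] [TopologicalSpace Y]
    (f : X → Y) : Prop :=
  Continuous f ∧ Function.Surjective f ∧
    ∀ U : Set X, IsOpen U → U.Nonempty → (interior (closure (f '' U))).Nonempty

/-- An inverse system of topological spaces over a preordered indexing set: spaces
`obj σ` and continuous surjective bonding maps `map : obj σ → obj ρ` for `ρ ≤ σ`,
compatible with identities and composition. -/
structure InvSys (I : Type u) [Preorder I] : Type (u + 1) where
  obj : I → Type u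
  topo : ∀ σ, TopologicalSpace (obj σ)
  map : ∀ {ρ σ : I}, ρ ≤ σ → obj σ → obj ρ
  map_id : ∀ (σ : I) (x : obj σ), map (le_refl σ) x = x
  map_comp : ∀ {ρ σ τ : I} (h₁ : ρ ≤ σ) (h₂ : σ ≤ τ) (x : obj τ),
    map h₁ (map h₂ x) = map (h₁.trans h₂) x
  map_cont : ∀ {ρ σ : I} (h : ρ ≤ σ), Continuous[topo σ, topo ρ] (map h)
  map_surj : ∀ {ρ σ : I} (h : ρ ≤ σ), Function.Surjective (map h)

/-- The inverse limit of an inverse system: the subspace of the product consisting of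
all threads. -/
def InvSys.Limit {I : Type u} [Preorder I] (D : InvSys I) : Type u :=
  {x : ∀ σ, D.obj σ // ∀ (ρ σ : I) (h : ρ ≤ σ), D.map h (x σ) = x ρ}

/-- The limit carries the subspace topology of the product topology. -/
instance InvSys.instTopLimit {I : Type u} [Preorder I] (D : InvSys I) :
    TopologicalSpace D.Limit :=
  TopologicalSpace.induced Subtype.val (@Pi.topologicalSpace _ _ D.topo)

/-- The inverse limit of the subsystem of an inverse system determined by a subset `A`
of the indexing set. -/
def InvSys.chainLimit {I : Type u} [Preorder I] (D : InvSys I) (A : Set I) : Type u :=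
  {x : ∀ a : A, D.obj a // ∀ (a b : A) (h : (a : I) ≤ b), D.map h (x b) = x a}

instance InvSys.instTopChainLimit {I : Type u} [Preorder I] (D : InvSys I) (A : Set I) :
    TopologicalSpace (D.chainLimit A) :=
  TopologicalSpace.induced Subtype.val (@Pi.topologicalSpace _ _ fun a : A => D.topo a)

/-- The canonical map from `obj σ`, for `σ` an upper bound of `A`, to the limit of the
subsystem over `A`. -/
def InvSys.toChainLimit {I : Type u} [Preorder I] (D : InvSys I) (A : Set I) (σ : I)
    (h : ∀ a ∈ A, a ≤ σ) : D.obj σ → D.chainLimit A :=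
  fun x => ⟨fun a => D.map (h a a.2) x, fun _ b hab => D.map_comp hab (h b b.2) x⟩

/-- `κ`-completeness of an inverse system: every chain of cardinality at most `κ` in the
indexing set has a least upper bound, and for every such chain with least upper bound
`σ`, the canonical map from `obj σ` to the limit of the subsystem over the chain is a
homeomorphism. -/
def InvSys.IsComplete {I : Type u} [Preorder I] (D : InvSys I) (κ : Cardinal.{u}) : Prop :=
  (∀ A : Set I, IsChain (· ≤ ·) A → #A ≤ κ → ∃ σ : I, IsLUB A σ) ∧
  (∀ A : Set I, IsChain (· ≤ ·) A → #A ≤ κ → ∀ σ : I, ∀ hσ : IsLUB A σ,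
    @IsHomeomorph _ _ (D.topo σ) (D.instTopChainLimit A)
      (D.toChainLimit A σ fun _ ha => hσ.1 ha))

/-- The weight of a topological space (with explicitly given topology): the least
cardinality of a base of the topology. -/
noncomputable def tweight (X : Type u) (t : TopologicalSpace X) : Cardinal.{u} :=
  sInf {c : Cardinal.{u} | ∃ B : Set (Set X),
    @TopologicalSpace.IsTopologicalBasis X t B ∧ #B = c}

/-- The class `C_κ`: spaces homeomorphic to the inverse limit of a `κ`-complete inverse
system over a directed poset, with all spaces `T₀` of weight at most `κ` and all bonding
maps skeletal. -/
def MemClassC (X : Type u) [TopologicalSpace X] (κ : Cardinal.{u}) : Prop :=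
  ∃ (I : Type u) (_ : PartialOrder I), IsDirected I (· ≤ ·) ∧
    ∃ D : InvSys I, D.IsComplete κ ∧
      (∀ σ : I, @T0Space (D.obj σ) (D.topo σ)) ∧
      (∀ σ : I, tweight (D.obj σ) (D.topo σ) ≤ κ) ∧
      (∀ (ρ σ : I) (h : ρ ≤ σ), @Skeletal _ _ (D.topo σ) (D.topo ρ) (D.map h)) ∧
      Nonempty (X ≃ₜ D.Limit)

namespace KurepaAux

variable {α ι : Type u}

attribute [local instance] Classical.propDecidable

/-- Witness choice for the Erdős–Rado closure: a point outside `range e` realizing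
pattern `p`, if one exists. -/
noncomputable def wit [Nonempty α] (g : α → α → ι) {T : Type u} (e : T → α) (p : T → ι) : α :=
  if h : ∃ b, b ∉ Set.range e ∧ ∀ t, g (e t) b = p t then h.choose else Classical.arbitrary α

lemma wit_spec [Nonempty α] (g : α → α → ι) {T : Type u} (e : T → α) (p : T → ι)
    (h : ∃ b, b ∉ Set.range e ∧ ∀ t, g (e t) b = p t) :
    wit g e p ∉ Set.range e ∧ ∀ t, g (e t) (wit g e p) = p t := by
  classical
  rw [wit]
  rw [dif_pos h]
  exact h.choose_spec

/-- One closure step: add witnesses for all small patterns over `B`. -/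
noncomputable def step (κ : Cardinal.{u}) [Nonempty α] (g : α → α → ι) (B : Set α) : Set α :=
  B ∪ Set.range (fun z : (κ.ord.ToType → B) × (κ.ord.ToType → ι) =>
    wit g (fun t => (z.1 t : α)) z.2)

lemma subset_step (κ : Cardinal.{u}) [Nonempty α] (g : α → α → ι) (B : Set α) :
    B ⊆ step κ g B := Set.subset_union_left

lemma card_step (κ : Cardinal.{u}) (hκ : ℵ₀ ≤ κ) [Nonempty α] (g : α → α → ι)
    (hι : #ι ≤ κ) (B : Set α) (hB : #B ≤ 2 ^ κ) : #(step κ g B) ≤ 2 ^ κ := by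
  have h2 : ℵ₀ ≤ 2 ^ κ := hκ.trans (cantor κ).le
  have hTB : #((κ.ord.ToType → B) × (κ.ord.ToType → ι)) ≤ 2 ^ κ := by
    rw [mk_prod, Cardinal.lift_id, Cardinal.lift_id]
    have h1 : #(κ.ord.ToType → B) ≤ 2 ^ κ := by
      rw [← power_def, mk_ord_toType]
      calc (#B) ^ κ ≤ (2 ^ κ) ^ κ := power_le_power_right hB
        _ = 2 ^ (κ * κ) := (power_mul).symm
        _ = 2 ^ κ := by rw [mul_eq_self hκ]
    have h2' : #(κ.ord.ToType → ι) ≤ 2 ^ κ := by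
      rw [← power_def, mk_ord_toType]
      calc (#ι) ^ κ ≤ (2 ^ κ) ^ κ := power_le_power_right (hι.trans (cantor κ).le)
        _ = 2 ^ (κ * κ) := (power_mul).symm
        _ = 2 ^ κ := by rw [mul_eq_self hκ]
    calc #(κ.ord.ToType → B) * #(κ.ord.ToType → ι) ≤ 2 ^ κ * 2 ^ κ :=
          mul_le_mul' h1 h2'
      _ = 2 ^ κ := mul_eq_self h2
  calc #(step κ g B) ≤ #B + #(Set.range (fun z : (κ.ord.ToType → B) × (κ.ord.ToType → ι) =>
        wit g (fun t => (z.1 t : α)) z.2)) := mk_union_le _ _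
    _ ≤ 2 ^ κ + 2 ^ κ := add_le_add hB (mk_range_le.trans hTB)
    _ = 2 ^ κ := add_eq_self h2

/-- Transfinite iteration of the closure step, `κ⁺`-many times. -/
noncomputable def tower (κ : Cardinal.{u}) [Nonempty α] (g : α → α → ι) :
    (Order.succ κ).ord.ToType → Set α :=
  wellFounded_lt.fix fun i ih =>
    step κ g (insert (Classical.arbitrary α) (⋃ j : {j // j < i}, ih j.1 j.2))

lemma tower_eq (κ : Cardinal.{u}) [Nonempty α] (g : α → α → ι)
    (i : (Order.succ κ).ord.ToType) :
    tower κ g i =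
      step κ g (insert (Classical.arbitrary α) (⋃ j : {j // j < i}, tower κ g j.1)) :=
  WellFounded.fix_eq _ _ _


lemma arb_mem_tower (κ : Cardinal.{u}) [Nonempty α] (g : α → α → ι)
    (i : (Order.succ κ).ord.ToType) : Classical.arbitrary α ∈ tower κ g i := by
  rw [tower_eq]
  exact subset_step _ _ _ (Set.mem_insert _ _)

lemma tower_mono (κ : Cardinal.{u}) [Nonempty α] (g : α → α → ι)
    {i j : (Order.succ κ).ord.ToType} (h : j < i) : tower κ g j ⊆ tower κ g i := by
  rw [tower_eq κ g i]
  refine subset_trans ?_ (subset_step _ _ _)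
  refine subset_trans ?_ (Set.subset_insert _ _)
  exact Set.subset_iUnion (fun z : {z // z < i} => tower κ g z.1) ⟨j, h⟩

lemma card_Iio (κ : Cardinal.{u}) (i : (Order.succ κ).ord.ToType) :
    #{j // j < i} ≤ κ := by
  have := Cardinal.mk_Iio_ord_toType i
  exact Order.lt_succ_iff.mp this

lemma card_tower (κ : Cardinal.{u}) (hκ : ℵ₀ ≤ κ) [Nonempty α] (g : α → α → ι)
    (hι : #ι ≤ κ) (i : (Order.succ κ).ord.ToType) : #(tower κ g i) ≤ 2 ^ κ := by
  have h2 : ℵ₀ ≤ 2 ^ κ := hκ.trans (cantor κ).le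
  refine wellFounded_lt.induction (C := fun i => #(tower κ g i) ≤ 2 ^ κ) i fun i ih => ?_
  show #(tower κ g i) ≤ 2 ^ κ
  rw [tower_eq]
  refine card_step κ hκ g hι _ ?_
  calc #(insert (Classical.arbitrary α) (⋃ j : {j // j < i}, tower κ g j.1) : Set α)
      ≤ #(⋃ j : {j // j < i}, tower κ g j.1) + 1 := mk_insert_le
    _ ≤ #{j // j < i} * (⨆ j : {j // j < i}, #(tower κ g j.1)) + 1 := by
        exact add_le_add_left (mk_iUnion_le _) 1
    _ ≤ κ * 2 ^ κ + 1 := by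
        refine add_le_add_left (mul_le_mul' (card_Iio κ i) ?_) 1
        exact ciSup_le' fun j => ih j.1 j.2
    _ ≤ 2 ^ κ * 2 ^ κ + 2 ^ κ := by
        refine add_le_add (mul_le_mul' ((cantor κ).le) le_rfl) ?_
        exact le_trans (le_trans one_le_aleph0 hκ) ((cantor κ).le)
    _ = 2 ^ κ := by rw [mul_eq_self h2, add_eq_self h2]

/-- The closed set `A` of size at most `2 ^ κ`. -/
noncomputable def limitSet (κ : Cardinal.{u}) [Nonempty α] (g : α → α → ι) : Set α :=
  ⋃ i, tower κ g i

lemma card_limitSet (κ : Cardinal.{u}) (hκ : ℵ₀ ≤ κ) [Nonempty α] (g : α → α → ι)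
    (hι : #ι ≤ κ) : #(limitSet κ g) ≤ 2 ^ κ := by
  have h2 : ℵ₀ ≤ 2 ^ κ := hκ.trans (cantor κ).le
  calc #(limitSet κ g) ≤ #((Order.succ κ).ord.ToType) * ⨆ i, #(tower κ g i) :=
        mk_iUnion_le _
    _ ≤ 2 ^ κ * 2 ^ κ := by
        refine mul_le_mul' ?_ (ciSup_le' fun i => card_tower κ hκ g hι i)
        rw [mk_ord_toType]
        exact Order.succ_le_of_lt (cantor κ)
    _ = 2 ^ κ := mul_eq_self h2

lemma exists_next (κ : Cardinal.{u}) (hκ : ℵ₀ ≤ κ) [Nonempty α] (g : α → α → ι)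
    (a : α) (ha : a ∉ limitSet κ g) (X : Set α) (hXA : X ⊆ limitSet κ g) (hX : #X ≤ κ) :
    ∃ b ∈ limitSet κ g, b ∉ X ∧ ∀ x ∈ X, g x b = g x a := by
  have hβ : Nonempty ((Order.succ κ).ord.ToType) := by
    rw [Ordinal.toType_nonempty_iff_ne_zero]
    simp [Cardinal.ord_eq_zero, Cardinal.succ_ne_zero]
  rcases X.eq_empty_or_nonempty with rfl | hne
  · refine ⟨Classical.arbitrary α, ?_, by simp, by simp⟩
    exact Set.mem_iUnion.mpr ⟨Classical.arbitrary _, arb_mem_tower κ g _⟩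
  · have hst : ∀ x : X, ∃ i, (x : α) ∈ tower κ g i := fun x =>
      Set.mem_iUnion.mp (hXA x.2)
    choose st hst' using hst
    have hbd : Set.Bounded (· < ·) (Set.range st) := by
      have hc : #(Set.range st) < Order.cof ((Order.succ κ).ord.ToType) := by
        rw [Ordinal.cof_toType, (isRegular_succ hκ).cof_ord]
        exact lt_of_le_of_lt (mk_range_le.trans hX) (Order.lt_succ κ)
      have hnc : ¬ IsCofinal (Set.range st) := fun hc' => (Order.cof_le hc').not_gt hc
      obtain ⟨x, hx⟩ := not_isCofinal_iff.mp hnc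
      exact ⟨x, hx⟩
    obtain ⟨i₀, hi₀⟩ := hbd
    have hXB : X ⊆ insert (Classical.arbitrary α) (⋃ j : {j // j < i₀}, tower κ g j.1) := by
      intro x hx
      refine Set.mem_insert_iff.mpr (Or.inr ?_)
      exact Set.mem_iUnion.mpr ⟨⟨st ⟨x, hx⟩, hi₀ _ (Set.mem_range_self _)⟩, hst' ⟨x, hx⟩⟩
    have : Nonempty X := hne.to_subtype
    obtain ⟨emb⟩ : Nonempty (X ↪ κ.ord.ToType) := by
      rw [← Cardinal.le_def, mk_ord_toType]; exact hX
    let e : κ.ord.ToType → X := Function.invFun emb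
    have hesurj : Function.Surjective e := Function.invFun_surjective emb.injective
    let e' : κ.ord.ToType →
        (insert (Classical.arbitrary α) (⋃ j : {j // j < i₀}, tower κ g j.1) : Set α) :=
      fun t => ⟨(e t : α), hXB (e t).2⟩
    let p : κ.ord.ToType → ι := fun t => g ((e t : α)) a
    have hrange : (Set.range fun t => ((e' t : α))) = X := by
      ext x
      constructor
      · rintro ⟨t, rfl⟩; exact (e t).2
      · intro hx
        obtain ⟨t, ht⟩ := hesurj ⟨x, hx⟩
        exact ⟨t, congrArg Subtype.val ht⟩
    have hreal : ∃ b, b ∉ (Set.range fun t => ((e' t : α))) ∧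
        ∀ t, g ((e' t : α)) b = p t :=
      ⟨a, by rw [hrange]; exact fun hmem => ha (hXA hmem), fun t => rfl⟩
    obtain ⟨hw1, hw2⟩ := wit_spec g (fun t => ((e' t : α))) p hreal
    refine ⟨wit g (fun t => ((e' t : α))) p, ?_, ?_, ?_⟩
    · refine Set.mem_iUnion.mpr ⟨i₀, ?_⟩
      rw [tower_eq]
      exact Set.mem_union_right _ ⟨⟨e', p⟩, rfl⟩
    · rwa [hrange] at hw1
    · intro x hx
      obtain ⟨t, ht⟩ := hesurj ⟨x, hx⟩
      have h1 : ((e t : α)) = x := congrArg Subtype.val ht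
      rw [← h1]
      exact hw2 t


lemma nonempty_succ_toType (κ : Cardinal.{u}) : Nonempty ((Order.succ κ).ord.ToType) := by
  rw [Ordinal.toType_nonempty_iff_ne_zero]
  simp [Cardinal.ord_eq_zero, Cardinal.succ_ne_zero]

lemma arb_mem_limitSet (κ : Cardinal.{u}) [Nonempty α] (g : α → α → ι) :
    Classical.arbitrary α ∈ limitSet κ g := by
  have := nonempty_succ_toType κ
  exact Set.mem_iUnion.mpr ⟨Classical.arbitrary _, arb_mem_tower κ g _⟩

lemma exists_next' (κ : Cardinal.{u}) (hκ : ℵ₀ ≤ κ) [Nonempty α] (g : α → α → ι)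
    (a : α) (ha : a ∉ limitSet κ g) (X : Set α) :
    ∃ b ∈ limitSet κ g,
      (X ⊆ limitSet κ g → #X ≤ κ → b ∉ X ∧ ∀ x ∈ X, g x b = g x a) := by
  by_cases h : X ⊆ limitSet κ g ∧ #X ≤ κ
  · obtain ⟨b, hb1, hb2, hb3⟩ := exists_next κ hκ g a ha X h.1 h.2
    exact ⟨b, hb1, fun _ _ => ⟨hb2, hb3⟩⟩
  · exact ⟨Classical.arbitrary α, arb_mem_limitSet κ g,
      fun h1 h2 => absurd ⟨h1, h2⟩ h⟩

/-- The end-homogeneous sequence of length `κ⁺`. -/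
noncomputable def seq (κ : Cardinal.{u}) (hκ : ℵ₀ ≤ κ) [Nonempty α] (g : α → α → ι)
    (a : α) (ha : a ∉ limitSet κ g) :
    (Order.succ κ).ord.ToType → {b : α // b ∈ limitSet κ g} :=
  wellFounded_lt.fix fun ξ ih =>
    ⟨(exists_next' κ hκ g a ha (Set.range fun z : {η // η < ξ} => (ih z.1 z.2 : α))).choose,
     (exists_next' κ hκ g a ha (Set.range fun z : {η // η < ξ} => (ih z.1 z.2 : α))).choose_spec.1⟩

lemma seq_val_eq (κ : Cardinal.{u}) (hκ : ℵ₀ ≤ κ) [Nonempty α] (g : α → α → ι)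
    (a : α) (ha : a ∉ limitSet κ g) (ξ : (Order.succ κ).ord.ToType) :
    (seq κ hκ g a ha ξ : α) =
      (exists_next' κ hκ g a ha
        (Set.range fun z : {η // η < ξ} => (seq κ hκ g a ha z.1 : α))).choose := by
  have h := WellFounded.fix_eq (r := ((· < ·) : (Order.succ κ).ord.ToType →
      (Order.succ κ).ord.ToType → Prop)) wellFounded_lt
    (fun ξ ih =>
      (⟨(exists_next' κ hκ g a ha (Set.range fun z : {η // η < ξ} => (ih z.1 z.2 : α))).choose,
       (exists_next' κ hκ g a ha
         (Set.range fun z : {η // η < ξ} =>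
           (ih z.1 z.2 : α))).choose_spec.1⟩ : {b : α // b ∈ limitSet κ g})) ξ
  exact congrArg Subtype.val h

lemma seq_spec (κ : Cardinal.{u}) (hκ : ℵ₀ ≤ κ) [Nonempty α] (g : α → α → ι)
    (a : α) (ha : a ∉ limitSet κ g) (ξ : (Order.succ κ).ord.ToType) :
    (seq κ hκ g a ha ξ : α) ∉
        (Set.range fun z : {η // η < ξ} => (seq κ hκ g a ha z.1 : α)) ∧
      ∀ x ∈ (Set.range fun z : {η // η < ξ} => (seq κ hκ g a ha z.1 : α)),
        g x (seq κ hκ g a ha ξ : α) = g x a := by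
  set X := Set.range fun z : {η // η < ξ} => (seq κ hκ g a ha z.1 : α) with hXdef
  have hXA : X ⊆ limitSet κ g := by
    rintro _ ⟨z, rfl⟩; exact (seq κ hκ g a ha z.1).2
  have hX : #X ≤ κ := mk_range_le.trans (card_Iio κ ξ)
  rw [seq_val_eq]
  exact (exists_next' κ hκ g a ha X).choose_spec.2 hXA hX

/-- The Erdős–Rado theorem `(2^κ)⁺ → (κ⁺)²_κ`, in the form needed here. -/
theorem erdos_rado {κ : Cardinal.{u}} (hκ : ℵ₀ ≤ κ) {α : Type u} [LinearOrder α]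
    [WellFoundedLT α] (hα : Order.succ (2 ^ κ) ≤ #α) {ι : Type u} (hι : #ι ≤ κ)
    (g : α → α → ι) (hg : ∀ x y, g x y = g y x) :
    ∃ (c : ι) (H : Set α), κ < #H ∧ ∀ u ∈ H, ∀ v ∈ H, u ≠ v → g u v = c := by
  haveI : Nonempty α := by
    have h0 : (⊥ : Cardinal) < #α := lt_of_lt_of_le (Order.bot_lt_succ (2 ^ κ)) hα
    exact Cardinal.mk_ne_zero_iff.mp h0.ne'
  obtain ⟨a, ha⟩ : ∃ a, a ∉ limitSet κ g := by
    by_contra hcon; push_neg at hcon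
    have h1 : limitSet κ g = Set.univ := Set.eq_univ_of_forall hcon
    have h2 : #α ≤ 2 ^ κ := by
      rw [← Cardinal.mk_univ, ← h1]; exact card_limitSet κ hκ g hι
    exact absurd h2 (not_le.mpr (lt_of_lt_of_le (Order.lt_succ (2 ^ κ)) hα))
  have hne : ∀ {η ξ : (Order.succ κ).ord.ToType}, η < ξ → (seq κ hκ g a ha η : α) ≠ (seq κ hκ g a ha ξ : α) := by
    intro η ξ hlt heq
    exact (seq_spec κ hκ g a ha ξ).1 ⟨⟨η, hlt⟩, heq⟩
  haveI : Nonempty ι := ⟨g a a⟩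
  obtain ⟨c, hc⟩ : ∃ c : ι, κ < #((fun η => g (seq κ hκ g a ha η : α) a) ⁻¹' {c}) := by
    by_contra hcon; push_neg at hcon
    have huniv : (Set.univ : Set ((Order.succ κ).ord.ToType)) =
        ⋃ c : ι, (fun η => g (seq κ hκ g a ha η : α) a) ⁻¹' {c} := by
      ext ξ; simp
    have h2 : #((Order.succ κ).ord.ToType) ≤ κ := by
      calc #((Order.succ κ).ord.ToType)
          = #(Set.univ : Set ((Order.succ κ).ord.ToType)) := Cardinal.mk_univ.symm
        _ = #(⋃ c : ι, (fun η => g (seq κ hκ g a ha η : α) a) ⁻¹' {c}) := by rw [huniv]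
        _ ≤ #ι * ⨆ c : ι, #((fun η => g (seq κ hκ g a ha η : α) a) ⁻¹' {c}) := mk_iUnion_le _
        _ ≤ κ * κ := mul_le_mul' hι (ciSup_le' fun c => hcon c)
        _ = κ := mul_eq_self hκ
    rw [mk_ord_toType] at h2
    exact absurd h2 (not_le.mpr (Order.lt_succ κ))
  have hinj : Function.Injective (fun η => (seq κ hκ g a ha η : α)) := by
    intro η ξ h
    rcases lt_trichotomy η ξ with hlt | heq | hlt
    · exact absurd h (hne hlt)
    · exact heq
    · exact absurd h.symm (hne hlt)
  refine ⟨c, (fun η => (seq κ hκ g a ha η : α)) '' ((fun η => g (seq κ hκ g a ha η : α) a) ⁻¹' {c}), ?_, ?_⟩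
  · rwa [mk_image_eq hinj]
  · rintro u ⟨η, hη, rfl⟩ v ⟨ξ, hξ, rfl⟩ huv
    have hηξ : η ≠ ξ := fun hh => huv (by rw [hh])
    have hη' : g (seq κ hκ g a ha η : α) a = c := hη
    have hξ' : g (seq κ hκ g a ha ξ : α) a = c := hξ
    rcases hηξ.lt_or_gt with hlt | hlt
    · have := (seq_spec κ hκ g a ha ξ).2 (seq κ hκ g a ha η : α) ⟨⟨η, hlt⟩, rfl⟩
      rw [this]; exact hη'
    · have := (seq_spec κ hκ g a ha η).2 (seq κ hκ g a ha ξ : α) ⟨⟨ξ, hlt⟩, rfl⟩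
      rw [hg ((seq κ hκ g a ha η : α)) ((seq κ hκ g a ha ξ : α)), this]; exact hξ'

end KurepaAux

namespace KurepaAux

lemma le_cellularity {Y : Type u} [TopologicalSpace Y] (U : Set (Set Y))
    (hU : ∀ V ∈ U, IsOpen V ∧ V.Nonempty) (hd : U.PairwiseDisjoint id) :
    #U ≤ cellularity Y := by
  have hb : BddAbove (Set.range fun (W : {W : Set (Set Y) //
      (∀ V ∈ W, IsOpen V ∧ V.Nonempty) ∧ W.PairwiseDisjoint id}) => #W.1) := by
    refine ⟨#(Set Y), ?_⟩
    rintro _ ⟨W, rfl⟩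
    exact mk_set_le W.1
  exact le_ciSup hb ⟨U, hU, hd⟩

end KurepaAux

open KurepaAux in
/-- Kurepa: If `c(X_s) ≤ κ` for every `s ∈ S`, then
`c(Π_{s∈S} X_s) ≤ 2^κ`. -/
theorem kurepa_cellularity_product (S : Type u) (X : S → Type u)
    [∀ s, TopologicalSpace (X s)] (κ : Cardinal.{u}) (hκ : ℵ₀ ≤ κ)
    (h : ∀ s, cellularity (X s) ≤ κ) :
    cellularity (∀ s, X s) ≤ 2 ^ κ := by
  classical
  refine ciSup_le' ?_
  rintro ⟨U, hUopen, hUdisj⟩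
  show #U ≤ 2 ^ κ
  by_contra hcon
  push_neg at hcon
  have hsucc : Order.succ (2 ^ κ) ≤ #U := Order.succ_le_of_lt hcon
  obtain ⟨emb⟩ : Nonempty ((Order.succ ((2 : Cardinal.{u}) ^ κ)).ord.ToType ↪ U) := by
    refine (Cardinal.le_def _ _).mp ?_
    rwa [mk_ord_toType]
  set α := (Order.succ ((2 : Cardinal.{u}) ^ κ)).ord.ToType with hαdef
  let B : α → Set (∀ s, X s) := fun i => (emb i : Set (∀ s, X s))
  have hBopen : ∀ i, IsOpen (B i) ∧ (B i).Nonempty := fun i => hUopen _ (emb i).2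
  have hBdisj : ∀ {i j : α}, i ≠ j → B i ∩ B j = ∅ := by
    intro i j hij
    have hne : (emb i : Set (∀ s, X s)) ≠ (emb j : Set (∀ s, X s)) :=
      fun hh => hij (emb.injective (Subtype.ext hh))
    exact Set.disjoint_iff_inter_eq_empty.mp (hUdisj (emb i).2 (emb j).2 hne)
  choose y hy using fun i => (hBopen i).2
  have hbox : ∀ i, ∃ (F : Finset S) (V : ∀ s, Set (X s)),
      (∀ s ∈ F, IsOpen (V s) ∧ y i s ∈ V s) ∧ (F : Set S).pi V ⊆ B i := fun i =>
    isOpen_pi_iff.mp (hBopen i).1 (y i) (hy i)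
  choose F V hV hVsub using hbox
  have hwit : ∀ i j : α, i ≠ j → ∃ s, s ∈ F i ∧ s ∈ F j ∧ V i s ∩ V j s = ∅ := by
    intro i j hij
    by_contra hno
    push_neg at hno
    have hpt : ∀ s, ∃ z : X s, (s ∈ F i → z ∈ V i s) ∧ (s ∈ F j → z ∈ V j s) := by
      intro s
      by_cases h1 : s ∈ F i
      · by_cases h2 : s ∈ F j
        · obtain ⟨z, hz⟩ := hno s h1 h2
          exact ⟨z, fun _ => hz.1, fun _ => hz.2⟩
        · exact ⟨y i s, fun _ => (hV i s h1).2, fun hh => absurd hh h2⟩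
      · by_cases h2 : s ∈ F j
        · exact ⟨y j s, fun hh => absurd hh h1, fun _ => (hV j s h2).2⟩
        · exact ⟨y i s, fun hh => absurd hh h1, fun hh => absurd hh h2⟩
    choose z hz1 hz2 using hpt
    have hzmem : z ∈ B i ∩ B j :=
      ⟨hVsub i fun s hs => hz1 s hs, hVsub j fun s hs => hz2 s hs⟩
    rw [hBdisj hij] at hzmem
    exact hzmem
  set pos : α → S → ℕ :=
    (fun i s => if h : s ∈ F i then (Fintype.equivFin (F i) ⟨s, h⟩ : ℕ) else 0) with hposdef
  have hposinj : ∀ i : α, ∀ s ∈ F i, ∀ s' ∈ F i, pos i s = pos i s' → s = s' := by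
    intro i s hs s' hs' hpp
    rw [hposdef] at hpp
    simp only [dif_pos hs, dif_pos hs'] at hpp
    have h2 : (Fintype.equivFin (F i)) ⟨s, hs⟩ = (Fintype.equivFin (F i)) ⟨s', hs'⟩ :=
      Fin.ext hpp
    have h3 := (Fintype.equivFin (F i)).injective h2
    exact congrArg Subtype.val h3
  set f : α → α → ULift.{u} (ℕ × ℕ) := (fun i j =>
    if h : ∃ s, s ∈ F i ∧ s ∈ F j ∧ V i s ∩ V j s = ∅
    then ⟨(pos i h.choose, pos j h.choose)⟩ else ⟨(0, 0)⟩) with hfdef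
  have hg : ∀ u v : α, f (min u v) (max u v) = f (min v u) (max v u) := by
    intro u v
    rw [min_comm, max_comm]
  have hκ' : #(ULift.{u} (ℕ × ℕ)) ≤ κ := by
    rw [Cardinal.mk_eq_aleph0 (ULift.{u} (ℕ × ℕ))]
    exact hκ
  have hα : Order.succ ((2 : Cardinal.{u}) ^ κ) ≤ #α := by rw [hαdef, mk_ord_toType]
  obtain ⟨c, H, hcard, hhom⟩ :=
    erdos_rado hκ hα hκ' (fun i j => f (min i j) (max i j)) hg
  have key : ∀ i j : α, i ∈ H → j ∈ H → ∀ hij : i < j,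
      pos i (hwit i j hij.ne).choose = c.down.1 ∧ pos j (hwit i j hij.ne).choose = c.down.2 := by
    intro i j hi hj hij
    have hfij : f (min i j) (max i j) = c := hhom i hi j hj hij.ne
    rw [min_eq_left hij.le, max_eq_right hij.le] at hfij
    simp only [hfdef] at hfij
    rw [dif_pos (hwit i j hij.ne)] at hfij
    exact ⟨congrArg (fun q => q.down.1) hfij, congrArg (fun q => q.down.2) hfij⟩
  have wspec : ∀ i j : α, ∀ hne : i ≠ j, (hwit i j hne).choose ∈ F i ∧
      (hwit i j hne).choose ∈ F j ∧
      V i (hwit i j hne).choose ∩ V j (hwit i j hne).choose = ∅ :=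
    fun i j hne => (hwit i j hne).choose_spec
  -- pick the two least elements of `H`
  have hHne : H.Nonempty := by
    rcases H.eq_empty_or_nonempty with rfl | hh
    · rw [Cardinal.mk_emptyCollection] at hcard
      exact absurd hcard (by simp [not_lt])
    · exact hh
  obtain ⟨i₀, hi₀H, hi₀min⟩ := (wellFounded_lt (α := α)).has_min H hHne
  have hH1ne : (H \ {i₀}).Nonempty := by
    by_contra hh
    rw [Set.not_nonempty_iff_eq_empty, Set.diff_eq_empty] at hh
    have : #H ≤ 1 := (mk_le_mk_of_subset hh).trans (by simp)
    exact absurd (this.trans (one_le_aleph0.trans hκ)) (not_le.mpr hcard)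
  obtain ⟨j₀, hj₀mem, hj₀min⟩ := (wellFounded_lt (α := α)).has_min _ hH1ne
  have hj₀H : j₀ ∈ H := hj₀mem.1
  have hi₀j₀ : i₀ < j₀ := by
    rcases lt_trichotomy i₀ j₀ with hh | hh | hh
    · exact hh
    · exact absurd hh.symm (by simpa using hj₀mem.2)
    · exact absurd hh (hi₀min j₀ hj₀H)
  -- all witnesses for pairs above `j₀` coincide
  have hEq0 : ∀ k : α, k ∈ H → ∀ h : j₀ < k,
      (hwit j₀ k h.ne).choose = (hwit i₀ j₀ hi₀j₀.ne).choose := by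
    intro k hk h
    have hik : i₀ < k := hi₀j₀.trans h
    have e1 : (hwit i₀ j₀ hi₀j₀.ne).choose = (hwit i₀ k hik.ne).choose := by
      refine hposinj i₀ _ (wspec i₀ j₀ hi₀j₀.ne).1 _ (wspec i₀ k hik.ne).1 ?_
      rw [(key i₀ j₀ hi₀H hj₀H hi₀j₀).1, (key i₀ k hi₀H hk hik).1]
    have e2 : (hwit i₀ k hik.ne).choose = (hwit j₀ k h.ne).choose := by
      refine hposinj k _ (wspec i₀ k hik.ne).2.1 _ (wspec j₀ k h.ne).2.1 ?_
      rw [(key i₀ k hi₀H hk hik).2, (key j₀ k hj₀H hk h).2]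
    rw [← e2, ← e1]
  have hEq : ∀ j k : α, j ∈ H → k ∈ H → j₀ < j → ∀ h2 : j < k,
      (hwit j k h2.ne).choose = (hwit i₀ j₀ hi₀j₀.ne).choose := by
    intro j k hj hk h1 h2
    have hk' : j₀ < k := h1.trans h2
    have e3 : (hwit j k h2.ne).choose = (hwit j₀ k hk'.ne).choose := by
      refine hposinj k _ (wspec j k h2.ne).2.1 _ (wspec j₀ k hk'.ne).2.1 ?_
      rw [(key j k hj hk h2).2, (key j₀ k hj₀H hk hk').2]
    rw [e3, hEq0 k hk hk']
  set s₀ : S := (hwit i₀ j₀ hi₀j₀.ne).choose with hs₀def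
  set H3 : Set α := {k | k ∈ H ∧ j₀ < k} with hH3def
  have hs₀F : ∀ k, k ∈ H3 → s₀ ∈ F k := by
    rintro k ⟨hk, hjk⟩
    rw [← hEq0 k hk hjk]
    exact (wspec j₀ k hjk.ne).2.1
  have hdisj : ∀ j k, j ∈ H3 → k ∈ H3 → j < k → V j s₀ ∩ V k s₀ = ∅ := by
    rintro j k ⟨hj, hj'⟩ ⟨hk, _⟩ hjk
    rw [← hEq j k hj hk hj' hjk]
    exact (wspec j k hjk.ne).2.2
  -- `H3` is large
  have hH3card : κ < #H3 := by
    by_contra hh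
    push_neg at hh
    have hsub : H ⊆ H3 ∪ {i₀, j₀} := by
      intro k hk
      by_cases h1 : k = i₀
      · exact Or.inr (by simp [h1])
      by_cases h2 : k = j₀
      · exact Or.inr (by simp [h2])
      refine Or.inl ⟨hk, ?_⟩
      have hnlt : ¬k < j₀ := hj₀min k ⟨hk, by simp [h1]⟩
      exact lt_of_le_of_ne (not_lt.mp hnlt) (Ne.symm h2)
    have hcount : #H ≤ κ := by
      calc #H ≤ #(H3 ∪ {i₀, j₀} : Set α) := mk_le_mk_of_subset hsub
        _ ≤ #H3 + #({i₀, j₀} : Set α) := mk_union_le _ _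
        _ ≤ κ + κ := by
            refine add_le_add hh ?_
            exact ((Set.toFinite _).lt_aleph0.le).trans hκ
        _ = κ := add_eq_self hκ
    exact absurd hcount (not_le.mpr hcard)
  -- the disjoint family in `X s₀`
  have hinj : Set.InjOn (fun k : α => V k s₀) H3 := by
    intro j hj k hk hVjk
    have hVjk' : V j s₀ = V k s₀ := hVjk
    by_contra hne
    rcases Ne.lt_or_gt hne with hlt | hlt
    · have hemp := hdisj j k hj hk hlt
      rw [hVjk', Set.inter_self] at hemp
      exact absurd hemp (Set.nonempty_iff_ne_empty.mp ⟨y k s₀, (hV k s₀ (hs₀F k hk)).2⟩)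
    · have hemp := hdisj k j hk hj hlt
      rw [← hVjk', Set.inter_self] at hemp
      exact absurd hemp (Set.nonempty_iff_ne_empty.mp ⟨y j s₀, (hV j s₀ (hs₀F j hj)).2⟩)
  have hfam : ∀ W ∈ (fun k : α => V k s₀) '' H3, IsOpen W ∧ W.Nonempty := by
    rintro _ ⟨k, hk, rfl⟩
    exact ⟨(hV k s₀ (hs₀F k hk)).1, ⟨y k s₀, (hV k s₀ (hs₀F k hk)).2⟩⟩
  have hpd : ((fun k : α => V k s₀) '' H3).PairwiseDisjoint id := by
    rintro _ ⟨j, hj, rfl⟩ _ ⟨k, hk, rfl⟩ hne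
    have hjk : j ≠ k := fun hh => hne (by rw [hh])
    refine Set.disjoint_iff_inter_eq_empty.mpr ?_
    rcases hjk.lt_or_gt with hlt | hlt
    · exact hdisj j k hj hk hlt
    · rw [Set.inter_comm]
      exact hdisj k j hk hj hlt
  have hbig : κ < cellularity (X s₀) := by
    refine lt_of_lt_of_le ?_ (le_cellularity _ hfam hpd)
    rwa [mk_image_eq_of_injOn _ _ hinj]
  exact absurd (h s₀) (not_le.mpr hbig)
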